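/- Let σ_1 ≥ σ_2 ≥ ... ≥ σ_N ≥ 0, let k ≤ N, and let a_1,...,a_N ∈ [0,1] satisfy Σ a_i = k and Σ_{i=1}^k σ_i² ≤ Σ_{i=1}^N σ_i² a_i + ε σ_k². Let 0 < η ≤ 1 and let L = max{i : σ_i ≥ σ_k(1+η)}. Then Σ_{i=1}^L σ_i² (1 − a_i) ≤ ε(1+η)²σ_k²/(2η+η²) ≤ ε(1 + 1/η)σ_k². -/

import Mathlib

open Finset

set_option maxHeartbeats 1000000

theorem stmt_10 (N k L : ℕ) (σ a : ℕ → ℝ) (ε η : ℝ)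
    (hk1 : 1 ≤ k) (hkN : k ≤ N)
    (hmono : ∀ i j, 1 ≤ i → i ≤ j → j ≤ N → σ j ≤ σ i)
    (hnn : ∀ i ∈ Finset.Icc 1 N, 0 ≤ σ i)
    (ha : ∀ i ∈ Finset.Icc 1 N, a i ∈ Set.Icc (0 : ℝ) 1)
    (hsum : ∑ i ∈ Finset.Icc 1 N, a i = (k : ℝ))
    (hmain : ∑ i ∈ Finset.Icc 1 k, σ i ^ 2 ≤ ∑ i ∈ Finset.Icc 1 N, σ i ^ 2 * a i + ε * σ k ^ 2)
    (hε : 0 ≤ ε) (hη0 : 0 < η) (hη1 : η ≤ 1)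
    (hLN : L ≤ N)
    (hL : ∀ i ∈ Finset.Icc 1 N, (σ k * (1 + η) ≤ σ i ↔ i ≤ L)) :
    (∑ i ∈ Finset.Icc 1 L, σ i ^ 2 * (1 - a i)
        ≤ ε * (1 + η) ^ 2 * σ k ^ 2 / (2 * η + η ^ 2)) ∧
    ε * (1 + η) ^ 2 * σ k ^ 2 / (2 * η + η ^ 2) ≤ ε * (1 + 1 / η) * σ k ^ 2 := by
  have hden : 0 < 2 * η + η ^ 2 := by nlinarith
  have hIcc : ∀ m : ℕ, Finset.Icc 1 m = Finset.Ioc 0 m := fun m => Finset.Icc_add_one_left_eq_Ioc 0 m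
  have hsecond : ε * (1 + η) ^ 2 * σ k ^ 2 / (2 * η + η ^ 2) ≤ ε * (1 + 1 / η) * σ k ^ 2 := by
    rw [div_le_iff₀ hden]
    have key : ε * (1 + 1 / η) * σ k ^ 2 * (2 * η + η ^ 2)
        = ε * σ k ^ 2 * ((1 + η) * (2 + η)) := by
      field_simp
      ring
    rw [key]
    nlinarith [mul_nonneg hε (sq_nonneg (σ k)), hη0.le,
      mul_nonneg (mul_nonneg hε (sq_nonneg (σ k))) hη0.le]
  refine ⟨?_, hsecond⟩
  have hkmem : k ∈ Finset.Icc 1 N := Finset.mem_Icc.mpr ⟨hk1, hkN⟩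
  simp only [hIcc] at hmain hsum ⊢
  rcases (hnn k hkmem).eq_or_lt with hs | hs
  · -- σ k = 0
    have hσk2 : σ k ^ 2 = 0 := by rw [← hs]; ring
    have hRHS : ε * (1 + η) ^ 2 * σ k ^ 2 / (2 * η + η ^ 2) = 0 := by
      rw [hσk2]; simp
    rw [hRHS]
    have hstep : ∑ i ∈ Ioc 0 L, σ i ^ 2 * (1 - a i)
        ≤ ∑ i ∈ Ioc 0 N, σ i ^ 2 * (1 - a i) := by
      apply Finset.sum_le_sum_of_subset_of_nonneg (Finset.Ioc_subset_Ioc_right hLN)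
      intro i hi _
      obtain ⟨h0i, hiN⟩ := Finset.mem_Ioc.mp hi
      have hiN' : i ∈ Finset.Icc 1 N := Finset.mem_Icc.mpr ⟨h0i, hiN⟩
      have h1 := hnn i hiN'
      have h2 := (ha i hiN').2
      nlinarith
    have hsub : ∑ i ∈ Ioc 0 N, σ i ^ 2 * (1 - a i)
        = ∑ i ∈ Ioc 0 N, σ i ^ 2 - ∑ i ∈ Ioc 0 N, σ i ^ 2 * a i := by
      rw [← Finset.sum_sub_distrib]
      exact Finset.sum_congr rfl (fun i _ => by ring)
    have hsplit : ∑ i ∈ Ioc 0 N, σ i ^ 2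
        = ∑ i ∈ Ioc 0 k, σ i ^ 2 + ∑ i ∈ Ioc k N, σ i ^ 2 :=
      (Finset.sum_Ioc_consecutive _ (Nat.zero_le k) hkN).symm
    have htail : ∑ i ∈ Ioc k N, σ i ^ 2 = 0 := by
      apply Finset.sum_eq_zero
      intro i hi
      obtain ⟨hki, hiN⟩ := Finset.mem_Ioc.mp hi
      have h0i : 0 < i := lt_of_le_of_lt (Nat.zero_le k) hki
      have hiN' : i ∈ Finset.Icc 1 N := Finset.mem_Icc.mpr ⟨h0i, hiN⟩
      have h1 : σ i ≤ σ k := hmono k i hk1 hki.le hiN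
      have h2 : 0 ≤ σ i := hnn i hiN'
      have h3 : σ i = 0 := le_antisymm (by linarith [hs.symm ▸ h1]) h2
      rw [h3]; ring
    have he : ε * σ k ^ 2 = 0 := by rw [hσk2]; ring
    linarith [hstep, hsub, hsplit, htail, hmain, he]
  · -- 0 < σ k
    have hkL : ¬ k ≤ L := by
      intro h
      have h2 := (hL k hkmem).mpr h
      nlinarith
    have hLk : L < k := not_le.mp hkL
    set T := ∑ i ∈ Ioc 0 L, (1 - a i) with hT
    set U := ∑ i ∈ Ioc L k, (1 - a i) with hU
    have I1 : (σ k * (1 + η)) ^ 2 * T ≤ ∑ i ∈ Ioc 0 L, σ i ^ 2 * (1 - a i) := by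
      rw [hT, Finset.mul_sum]
      apply Finset.sum_le_sum
      intro i hi
      obtain ⟨h0i, hiL⟩ := Finset.mem_Ioc.mp hi
      have hiN : i ∈ Finset.Icc 1 N := Finset.mem_Icc.mpr ⟨h0i, hiL.trans hLN⟩
      have h1 : σ k * (1 + η) ≤ σ i := (hL i hiN).mpr hiL
      have h2 : 0 ≤ 1 - a i := by linarith [(ha i hiN).2]
      have h3 : 0 ≤ σ k * (1 + η) := mul_nonneg hs.le (by linarith)
      have h4 : (σ k * (1 + η)) ^ 2 ≤ σ i ^ 2 := by nlinarith
      exact mul_le_mul_of_nonneg_right h4 h2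
    have I2 : σ k ^ 2 * U ≤ ∑ i ∈ Ioc L k, σ i ^ 2 * (1 - a i) := by
      rw [hU, Finset.mul_sum]
      apply Finset.sum_le_sum
      intro i hi
      obtain ⟨hLi, hik⟩ := Finset.mem_Ioc.mp hi
      have h0i : 0 < i := lt_of_le_of_lt (Nat.zero_le L) hLi
      have hiN : i ∈ Finset.Icc 1 N := Finset.mem_Icc.mpr ⟨h0i, hik.trans hkN⟩
      have h1 : σ k ≤ σ i := hmono i k h0i hik hkN
      have h2 : 0 ≤ 1 - a i := by linarith [(ha i hiN).2]
      have h4 : σ k ^ 2 ≤ σ i ^ 2 := by nlinarith [hs.le]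
      exact mul_le_mul_of_nonneg_right h4 h2
    have I3 : ∑ i ∈ Ioc k N, σ i ^ 2 * a i ≤ σ k ^ 2 * ∑ i ∈ Ioc k N, a i := by
      rw [Finset.mul_sum]
      apply Finset.sum_le_sum
      intro i hi
      obtain ⟨hki, hiN⟩ := Finset.mem_Ioc.mp hi
      have h0i : 0 < i := lt_of_le_of_lt (Nat.zero_le k) hki
      have hiN' : i ∈ Finset.Icc 1 N := Finset.mem_Icc.mpr ⟨h0i, hiN⟩
      have h1 : σ i ≤ σ k := hmono k i hk1 hki.le hiN
      have h2 : 0 ≤ σ i := hnn i hiN'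
      have h3 : 0 ≤ a i := (ha i hiN').1
      have h4 : σ i ^ 2 ≤ σ k ^ 2 := by nlinarith
      exact mul_le_mul_of_nonneg_right h4 h3
    have E1 : ∑ i ∈ Ioc 0 k, σ i ^ 2 = ∑ i ∈ Ioc 0 L, σ i ^ 2 + ∑ i ∈ Ioc L k, σ i ^ 2 :=
      (Finset.sum_Ioc_consecutive _ (Nat.zero_le L) hLk.le).symm
    have E2 : ∑ i ∈ Ioc 0 N, σ i ^ 2 * a i
        = ∑ i ∈ Ioc 0 k, σ i ^ 2 * a i + ∑ i ∈ Ioc k N, σ i ^ 2 * a i :=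
      (Finset.sum_Ioc_consecutive _ (Nat.zero_le k) hkN).symm
    have E3 : ∑ i ∈ Ioc 0 k, σ i ^ 2 * a i
        = ∑ i ∈ Ioc 0 L, σ i ^ 2 * a i + ∑ i ∈ Ioc L k, σ i ^ 2 * a i :=
      (Finset.sum_Ioc_consecutive _ (Nat.zero_le L) hLk.le).symm
    have E4 : ∑ i ∈ Ioc 0 N, a i = ∑ i ∈ Ioc 0 k, a i + ∑ i ∈ Ioc k N, a i :=
      (Finset.sum_Ioc_consecutive _ (Nat.zero_le k) hkN).symm
    have hTU : ∑ i ∈ Ioc k N, a i = T + U := by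
      have h1 : T + U = ∑ i ∈ Ioc 0 k, (1 - a i) :=
        Finset.sum_Ioc_consecutive _ (Nat.zero_le L) hLk.le
      have h2 : ∑ i ∈ Ioc 0 k, (1 - a i) = (k : ℝ) - ∑ i ∈ Ioc 0 k, a i := by
        rw [Finset.sum_sub_distrib]
        simp [Nat.card_Ioc]
      linarith [hsum, E4, h1, h2]
    have F1 : ∑ i ∈ Ioc 0 L, σ i ^ 2 * (1 - a i)
        = ∑ i ∈ Ioc 0 L, σ i ^ 2 - ∑ i ∈ Ioc 0 L, σ i ^ 2 * a i := by
      rw [← Finset.sum_sub_distrib]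
      exact Finset.sum_congr rfl (fun i _ => by ring)
    have F2 : ∑ i ∈ Ioc L k, σ i ^ 2 * (1 - a i)
        = ∑ i ∈ Ioc L k, σ i ^ 2 - ∑ i ∈ Ioc L k, σ i ^ 2 * a i := by
      rw [← Finset.sum_sub_distrib]
      exact Finset.sum_congr rfl (fun i _ => by ring)
    have I3' : ∑ i ∈ Ioc k N, σ i ^ 2 * a i ≤ σ k ^ 2 * T + σ k ^ 2 * U := by
      calc ∑ i ∈ Ioc k N, σ i ^ 2 * a i ≤ σ k ^ 2 * ∑ i ∈ Ioc k N, a i := I3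
        _ = σ k ^ 2 * T + σ k ^ 2 * U := by rw [hTU]; ring
    have h5 : ∑ i ∈ Ioc 0 L, σ i ^ 2 * (1 - a i) ≤ ε * σ k ^ 2 + σ k ^ 2 * T := by
      linarith [hmain, E1, E2, E3, I2, I3', F1, F2]
    have hfin : (σ k * (1 + η)) ^ 2 * T ≤ ε * σ k ^ 2 + σ k ^ 2 * T := le_trans I1 h5
    have h7 : σ k ^ 2 * T * (2 * η + η ^ 2) ≤ ε * σ k ^ 2 := by nlinarith [hfin]
    rw [le_div_iff₀ hden]
    calc (∑ i ∈ Ioc 0 L, σ i ^ 2 * (1 - a i)) * (2 * η + η ^ 2)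
        ≤ (ε * σ k ^ 2 + σ k ^ 2 * T) * (2 * η + η ^ 2) :=
          mul_le_mul_of_nonneg_right h5 hden.le
      _ = ε * σ k ^ 2 * (2 * η + η ^ 2) + σ k ^ 2 * T * (2 * η + η ^ 2) := by ring
      _ ≤ ε * σ k ^ 2 * (2 * η + η ^ 2) + ε * σ k ^ 2 := by linarith [h7]
      _ = ε * (1 + η) ^ 2 * σ k ^ 2 := by ring
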